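/- arXiv:1811.07959 — 9 statements merged into one kernel-verified Lean document; each statement's English description precedes it below -/
import Mathlib

section
/- Let G = (X, E) be a connected graph (of any cardinality) with no induced path on four vertices. Then there exists a vertex x in X such that N_x is nonempty if and only if the complement graph of G is disconnected. -/
/-- `(a,b,c,d)` is an induced path on four vertices in `G`: the vertices are distinct
and the only edges among them are `ab`, `bc`, `cd`. -/
def IsInducedP4 {X : Type*} (G : SimpleGraph X) (a b c d : X) : Prop :=
  a ≠ b ∧ a ≠ c ∧ a ≠ d ∧ b ≠ c ∧ b ≠ d ∧ c ≠ d ∧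
  G.Adj a b ∧ G.Adj b c ∧ G.Adj c d ∧ ¬ G.Adj a c ∧ ¬ G.Adj a d ∧ ¬ G.Adj b d

/-- A graph is `P4`-free if it has no induced path on four vertices. -/
def P4Free {X : Type*} (G : SimpleGraph X) : Prop :=
  ∀ a b c d : X, ¬ IsInducedP4 G a b c d

/-- `inc(x)`: the set of non-neighbours of `x` other than `x` itself. -/
def incSet {X : Type*} (G : SimpleGraph X) (x : X) : Set X :=
  {y | y ≠ x ∧ ¬ G.Adj x y}

/-- `N_x`: the neighbours of `x` which are adjacent to every element of `inc(x)`. -/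
def NSet {X : Type*} (G : SimpleGraph X) (x : X) : Set X :=
  {y | G.Adj x y ∧ ∀ z ∈ incSet G x, G.Adj y z}

/-- `A` is a module of `G`: every vertex outside `A` is adjacent to all of `A` or to none of `A`. -/
def IsModule {X : Type*} (G : SimpleGraph X) (A : Set X) : Prop :=
  ∀ v ∉ A, (∀ a ∈ A, G.Adj v a) ∨ (∀ a ∈ A, ¬ G.Adj v a)

/-- A cograph: every induced subgraph with at least two vertices is disconnected or has a
disconnected complement. -/
def Cograph {X : Type*} (G : SimpleGraph X) : Prop :=
  ∀ s : Set X, s.Nontrivial → ¬ (G.induce s).Connected ∨ ¬ ((G.induce s)ᶜ).Connected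

/-- If every `A`–`Aᶜ` pair is `G`-adjacent, then `Gᶜ`-walks cannot leave `Aᶜ`. -/
lemma walk_stay_out {X : Type*} (G : SimpleGraph X) (A : Set X)
    (hA : ∀ a ∈ A, ∀ b ∉ A, G.Adj a b) :
    ∀ {u v : X}, Gᶜ.Walk u v → u ∉ A → v ∉ A := by
  intro u v w
  induction w with
  | nil => exact id
  | cons h p ih =>
    intro hu
    apply ih
    intro hb
    exact h.2 ((hA _ hb _ hu).symm)

theorem exists_NSet_nonempty_iff_compl_not_connected
    {X : Type*} (G : SimpleGraph X) (hconn : G.Connected) (hP4 : P4Free G) :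
    (∃ x : X, (NSet G x).Nonempty) ↔ ¬ Gᶜ.Connected := by
  constructor
  · rintro ⟨x, y, hy⟩ hc
    -- N_x is completely joined to its complement
    have key : ∀ a ∈ NSet G x, ∀ b ∉ NSet G x, G.Adj a b := by
      rintro a ⟨hax, ha⟩ b hb
      by_contra hab
      -- b is either x, a non-neighbour of x, or a neighbour of x missing some w ∈ inc(x)
      rcases eq_or_ne b x with rfl | hbx
      · exact hab hax.symm
      by_cases hxb : G.Adj x b
      · -- b ∈ N(x) \ N_x : some w ∈ inc(x) with ¬ b ~ w; get P4 b-x-a-w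
        have : ¬ ∀ z ∈ incSet G x, G.Adj b z := fun h => hb ⟨hxb, h⟩
        push_neg at this
        obtain ⟨w, hw, hbw⟩ := this
        have haw : G.Adj a w := ha w hw
        refine hP4 b x a w ⟨hxb.ne', ?_, ?_, hax.ne, hw.1.symm.symm.symm, haw.ne, hxb.symm, hax, haw, fun h => hab h.symm, hbw, hw.2⟩
        · rintro rfl; exact hb ⟨hax, ha⟩
        · rintro rfl; exact hw.2 hxb
      · -- b ∈ inc(x), so a ~ b by definition of N_x
        exact hab (ha b ⟨hbx, hxb⟩)
    have hx : x ∉ NSet G x := fun h => G.irrefl h.1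
    exact (fun w => walk_stay_out G (NSet G x) key w hx hy) (hc.preconnected x y).some
  · intro hc
    have hne : Nonempty X := hconn.nonempty
    have hpre : ¬ Gᶜ.Preconnected := fun h => hc ⟨h⟩
    simp only [SimpleGraph.Preconnected, not_forall] at hpre
    obtain ⟨x, y, hxy⟩ := hpre
    refine ⟨x, y, ?_, ?_⟩
    · -- x and y are in different Gᶜ-components, so G.Adj x y
      by_contra hxyadj
      rcases eq_or_ne x y with rfl | hne'
      · exact hxy .rfl
      · exact hxy (SimpleGraph.Adj.reachable ((G.compl_adj _ _).mpr ⟨hne', hxyadj⟩))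
    · intro z hz
      -- z ∈ inc(x) ⊆ Gᶜ-component of x, and y is outside, so y ~ z
      have hzy : ¬ Gᶜ.Reachable z y := by
        intro h
        exact hxy ((SimpleGraph.Adj.reachable ((G.compl_adj _ _).mpr ⟨Ne.symm hz.1, hz.2⟩)).trans h)
      by_contra hyz
      rcases eq_or_ne z y with rfl | hne'
      · exact hzy .rfl
      · exact hzy (SimpleGraph.Adj.reachable ((G.compl_adj _ _).mpr ⟨hne', fun h => hyz h.symm⟩))
end

section
/- A finite graph G is a cograph if and only if G has no induced path on four vertices. -/
-- Lemma A: any vertex outside NSet is adjacent to every vertex of NSet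
lemma lemA {X : Type*} {G : SimpleGraph X} (hP : P4Free G) (x : X)
    {v y : X} (hy : y ∈ NSet G x) (hv : v ∉ NSet G x) (hne : v ≠ y) : G.Adj v y := by
  by_cases hvx : v = x
  · exact hvx ▸ hy.1
  by_cases hxv : G.Adj x v
  · -- v is a neighbour of x not in NSet, so misses some z in incSet
    by_contra hvy
    have : ¬ ∀ z ∈ incSet G x, G.Adj v z := fun h => hv ⟨hxv, h⟩
    push_neg at this
    obtain ⟨z, hz, hvz⟩ := this
    refine hP z y x v ⟨?_, ?_, ?_, ?_, ?_, ?_, ?_, ?_, ?_, ?_, ?_, ?_⟩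
    · exact fun e => hz.2 (e ▸ hy.1)
    · exact hz.1
    · exact fun e => hz.2 (by rw [e]; exact hxv)
    · exact hy.1.ne'
    · exact hne.symm
    · exact hxv.ne
    · exact ((hy.2 z hz)).symm
    · exact hy.1.symm
    · exact hxv
    · exact fun e => hz.2 e.symm
    · exact fun e => hvz e.symm
    · exact fun e => hvy e.symm
  · -- v ∈ incSet, and y is adjacent to all of incSet
    exact (hy.2 v ⟨hvx, hxv⟩).symm

lemma closed_walk {X : Type*} {H : SimpleGraph X} {S : Set X}
    (hS : ∀ u ∈ S, ∀ v, H.Adj u v → v ∈ S) {u v : X} (w : H.Walk u v) (hu : u ∈ S) :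
    v ∈ S := by
  induction w with
  | nil => exact hu
  | cons h p ih => exact ih (hS _ hu _ h)

lemma dist_two {X : Type*} {G : SimpleGraph X} (hP : P4Free G) {x z : X}
    (w : G.Walk z x) : z = x ∨ G.Adj x z ∨ ∃ u, G.Adj x u ∧ G.Adj u z := by
  induction w with
  | nil => exact Or.inl rfl
  | @cons a b c h p ih =>
    by_cases hzx : a = c
    · exact Or.inl hzx
    by_cases hxz : G.Adj c a
    · exact Or.inr (Or.inl hxz)
    rcases ih with rfl | hxu | ⟨w', hxw, hwu⟩
    · exact Or.inr (Or.inl h.symm)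
    · exact Or.inr (Or.inr ⟨b, hxu, h.symm⟩)
    · by_cases hwz : G.Adj w' a
      · exact Or.inr (Or.inr ⟨w', hxw, hwz⟩)
      by_cases hxu : G.Adj c b
      · exact Or.inr (Or.inr ⟨b, hxu, h.symm⟩)
      exfalso
      refine hP a b w' c ⟨h.ne, ?_, hzx, hwu.ne', ?_, hxw.ne', h, hwu.symm, hxw.symm,
        fun e => hwz e.symm, fun e => hxz e.symm, fun e => hxu e.symm⟩
      · exact fun e => hxz (by rw [e]; exact hxw)
      · exact fun e => hxz (e ▸ h).symm

lemma nset_nonempty {X : Type*} [Fintype X] {G : SimpleGraph X} (hP : P4Free G)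
    (hc : G.Connected) (hnt : Nontrivial X) (x : X) : (NSet G x).Nonempty := by
  classical
  obtain ⟨y0, hy0⟩ := exists_ne x
  by_cases hinc : ∃ z, z ∈ incSet G x
  · -- x has a neighbour; choose one maximizing neighbours inside incSet
    have hxnbr : ∃ y, G.Adj x y := by
      obtain ⟨z0, hz0⟩ := hinc
      rcases dist_two hP ((hc.preconnected x z0).symm.some) with e | ha | ⟨u, hu, _⟩
      · exact absurd e hz0.1
      · exact absurd ha hz0.2
      · exact ⟨u, hu⟩
    set f : X → ℕ := fun y => (Finset.univ.filter fun z => z ∈ incSet G x ∧ G.Adj y z).card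
      with hf
    obtain ⟨y, hymem, hymax⟩ :=
      (Finset.univ.filter fun y => G.Adj x y).exists_max_image f
        ⟨hxnbr.choose, by simp [hxnbr.choose_spec]⟩
    have hxy : G.Adj x y := by simpa using hymem
    refine ⟨y, hxy, ?_⟩
    intro z hz
    by_contra hyz
    -- z is at distance 2 from x: common neighbour u
    obtain ⟨u, hxu, huz⟩ : ∃ u, G.Adj x u ∧ G.Adj u z := by
      rcases dist_two hP ((hc.preconnected x z).symm.some) with e | ha | h
      · exact absurd e hz.1
      · exact absurd ha hz.2
      · exact h
    by_cases hyu : G.Adj y u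
    · -- use maximality to get z' adjacent to y but not u
      have hle : f u ≤ f y := hymax u (by simpa using hxu)
      obtain ⟨z', hz', hyz', huz'⟩ : ∃ z', z' ∈ incSet G x ∧ G.Adj y z' ∧ ¬ G.Adj u z' := by
        by_contra hall
        push_neg at hall
        have hsub : (Finset.univ.filter fun w => w ∈ incSet G x ∧ G.Adj y w) ⊂
            (Finset.univ.filter fun w => w ∈ incSet G x ∧ G.Adj u w) := by
          constructor
          · intro w hw
            simp only [Finset.mem_filter, Finset.mem_univ, true_and] at hw ⊢
            exact ⟨hw.1, hall w hw.1 hw.2⟩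
          · intro hcon
            have hzmem : z ∈ Finset.univ.filter fun w => w ∈ incSet G x ∧ G.Adj u w := by
              simp only [Finset.mem_filter, Finset.mem_univ, true_and]
              exact ⟨hz, huz⟩
            have := hcon hzmem
            simp only [Finset.mem_filter, Finset.mem_univ, true_and] at this
            exact hyz this.2
        exact absurd hle (not_le.mpr (Finset.card_lt_card hsub))
      by_cases hzz' : G.Adj z z'
      · -- P4 : z z' y x
        refine hP z z' y x ⟨hzz'.ne, ?_, hz.1, hyz'.ne', hz'.1, hxy.ne', hzz', hyz'.symm,
          hxy.symm, fun e => hyz e.symm, fun e => hz.2 e.symm, fun e => hz'.2 e.symm⟩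
        exact fun e => hz.2 (by rw [e]; exact hxy)
      · -- P4 : z' y u z
        refine hP z' y u z ⟨hyz'.ne', ?_, ?_, hyu.ne, ?_, huz.ne, hyz'.symm, hyu, huz,
          fun e => huz' e.symm, fun e => hzz' e.symm, hyz⟩
        · exact fun e => hz'.2 (by rw [e]; exact hxu)
        · exact fun e => huz' (by rw [e]; exact huz)
        · exact fun e => hz.2 (by rw [← e]; exact hxy)
    · -- P4 : z u x y
      refine hP z u x y ⟨huz.ne', hz.1, ?_, hxu.ne', ?_, hxy.ne, huz.symm, hxu.symm, hxy,
        fun e => hz.2 e.symm, fun e => hyz e.symm, fun e => hyu e.symm⟩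
      · exact fun e => hz.2 (by rw [e]; exact hxy)
      · exact fun e => hyz (e ▸ huz)
  · -- incSet is empty: every other vertex is a neighbour, vacuously in NSet
    push_neg at hinc
    refine ⟨y0, ?_, fun z hz => absurd hz (hinc z)⟩
    by_contra hxy0
    exact hinc y0 ⟨hy0, hxy0⟩

lemma key_lemma {Y : Type*} [Fintype Y] {H : SimpleGraph Y} (hP : P4Free H)
    (hnt : Nontrivial Y) (hc : H.Connected) : ¬ Hᶜ.Connected := by
  obtain ⟨x, -, -⟩ := hnt.exists_pair_ne
  obtain ⟨y, hy⟩ := nset_nonempty hP hc hnt x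
  intro hcc
  have hclosed : ∀ u ∈ NSet H x, ∀ v, Hᶜ.Adj u v → v ∈ NSet H x := by
    intro u hu v hadj
    by_contra hv
    exact hadj.2 (lemA hP x hu hv hadj.ne').symm
  obtain ⟨w⟩ := hcc.preconnected y x
  have hx : x ∈ NSet H x := closed_walk hclosed w hy
  exact H.irrefl hx.1

lemma p4free_induce {X : Type*} {G : SimpleGraph X} (h : P4Free G) (s : Set X) :
    P4Free (G.induce s) := by
  rintro a b c d ⟨h1, h2, h3, h4, h5, h6, h7, h8, h9, h10, h11, h12⟩
  refine h a b c d ⟨?_, ?_, ?_, ?_, ?_, ?_, h7, h8, h9, h10, h11, h12⟩ <;>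
    simp [Subtype.coe_ne_coe, h1, h2, h3, h4, h5, h6]


theorem finite_cograph_iff_P4Free
    {X : Type*} [Fintype X] (G : SimpleGraph X) :
    Cograph G ↔ P4Free G := by
  constructor
  · -- Cograph → P4Free
    intro hco a b c d hp
    obtain ⟨hab, hac, had, hbc, hbd, hcd, eab, ebc, ecd, nac, nad, nbd⟩ := hp
    set s : Set X := {a, b, c, d} with hs
    have hA : a ∈ s := by simp [hs]
    have hB : b ∈ s := by simp [hs]
    have hC : c ∈ s := by simp [hs]
    have hD : d ∈ s := by simp [hs]
    set A : s := ⟨a, hA⟩ with hAd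
    set B : s := ⟨b, hB⟩ with hBd
    set C : s := ⟨c, hC⟩ with hCd
    set D : s := ⟨d, hD⟩ with hDd
    have hmem : ∀ u : s, u = A ∨ u = B ∨ u = C ∨ u = D := by
      rintro ⟨u, hu⟩
      simp only [hs, Set.mem_insert_iff, Set.mem_singleton_iff] at hu
      rcases hu with rfl | rfl | rfl | rfl
      · exact Or.inl rfl
      · exact Or.inr (Or.inl rfl)
      · exact Or.inr (Or.inr (Or.inl rfl))
      · exact Or.inr (Or.inr (Or.inr rfl))
    have hcon : (G.induce s).Connected := by
      have hub : ∀ u : s, (G.induce s).Reachable u B := by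
        intro u
        rcases hmem u with rfl | rfl | rfl | rfl
        · exact SimpleGraph.Adj.reachable (by exact eab)
        · exact SimpleGraph.Reachable.refl _
        · exact SimpleGraph.Adj.reachable (by exact ebc.symm)
        · exact (SimpleGraph.Adj.reachable (show (G.induce s).Adj D C from ecd.symm)).trans
            (SimpleGraph.Adj.reachable (show (G.induce s).Adj C B from ebc.symm))
      haveI : Nonempty s := ⟨B⟩
      exact SimpleGraph.Connected.mk fun u v => (hub u).trans (hub v).symm
    have hcon2 : ((G.induce s)ᶜ).Connected := by
      have hub : ∀ u : s, ((G.induce s)ᶜ).Reachable u A := by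
        intro u
        have eCA : ((G.induce s)ᶜ).Adj C A :=
          ⟨fun e => hac (congrArg Subtype.val e).symm, fun h => nac (h : G.Adj c a).symm⟩
        have eDA : ((G.induce s)ᶜ).Adj D A :=
          ⟨fun e => had (congrArg Subtype.val e).symm, fun h => nad (h : G.Adj d a).symm⟩
        have eBD : ((G.induce s)ᶜ).Adj B D :=
          ⟨fun e => hbd (congrArg Subtype.val e), fun h => nbd (h : G.Adj b d)⟩
        rcases hmem u with rfl | rfl | rfl | rfl
        · exact SimpleGraph.Reachable.refl _
        · exact eBD.reachable.trans eDA.reachable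
        · exact eCA.reachable
        · exact eDA.reachable
      haveI : Nonempty s := ⟨A⟩
      exact SimpleGraph.Connected.mk fun u v => (hub u).trans (hub v).symm
    rcases hco s ⟨a, hA, b, hB, hab⟩ with h | h
    · exact h hcon
    · exact h hcon2
  · -- P4Free → Cograph
    intro hP s hnt
    have : Fintype s := Set.Finite.fintype (Set.toFinite s)
    have hnt' : Nontrivial s := Set.nontrivial_coe_sort.mpr hnt
    have hPs : P4Free (G.induce s) := p4free_induce hP s
    by_cases hc : (G.induce s).Connected
    · exact Or.inr (key_lemma hPs hnt' hc)
    · exact Or.inl hc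
end

section
/- Every cograph (of any cardinality) has no induced path on four vertices. -/
theorem P4Free_of_cograph {X : Type*} (G : SimpleGraph X) (h : Cograph G) :
    P4Free G := by
  intro a b c d hp
  obtain ⟨hab, hac, had, hbc, hbd, hcd, Aab, Abc, Acd, nac, nad, nbd⟩ := hp
  set s : Set X := {a, b, c, d} with hs
  have ha : a ∈ s := by simp [hs]
  have hb : b ∈ s := by simp [hs]
  have hc : c ∈ s := by simp [hs]
  have hd : d ∈ s := by simp [hs]
  set A : s := ⟨a, ha⟩
  set B : s := ⟨b, hb⟩
  set C : s := ⟨c, hc⟩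
  set D : s := ⟨d, hd⟩
  have hmem : ∀ u : s, u = A ∨ u = B ∨ u = C ∨ u = D := by
    rintro ⟨u, hu⟩
    simp only [hs, Set.mem_insert_iff, Set.mem_singleton_iff] at hu
    rcases hu with rfl | rfl | rfl | rfl
    · exact Or.inl rfl
    · exact Or.inr (Or.inl rfl)
    · exact Or.inr (Or.inr (Or.inl rfl))
    · exact Or.inr (Or.inr (Or.inr rfl))
  rcases h s ⟨a, ha, b, hb, hab⟩ with hcon | hcon
  · apply hcon
    have hne : Nonempty s := ⟨A⟩
    refine SimpleGraph.Connected.mk (fun u v => ?_)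
    have rAB : (G.induce s).Reachable A B := SimpleGraph.Adj.reachable Aab
    have rBC : (G.induce s).Reachable B C := SimpleGraph.Adj.reachable Abc
    have rCD : (G.induce s).Reachable C D := SimpleGraph.Adj.reachable Acd
    have rAC := rAB.trans rBC
    have rAD := rAC.trans rCD
    have rBD := rBC.trans rCD
    rcases hmem u with rfl | rfl | rfl | rfl <;> rcases hmem v with rfl | rfl | rfl | rfl <;>
      first
        | exact SimpleGraph.Reachable.refl _
        | exact rAB | exact rAB.symm | exact rBC | exact rBC.symm
        | exact rCD | exact rCD.symm | exact rAC | exact rAC.symm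
        | exact rAD | exact rAD.symm | exact rBD | exact rBD.symm
  · apply hcon
    have hne : Nonempty s := ⟨A⟩
    refine SimpleGraph.Connected.mk (fun u v => ?_)
    have rCA : ((G.induce s)ᶜ).Reachable C A :=
      SimpleGraph.Adj.reachable ⟨fun e => hac (congrArg Subtype.val e).symm, fun e => nac e.symm⟩
    have rAD : ((G.induce s)ᶜ).Reachable A D :=
      SimpleGraph.Adj.reachable ⟨fun e => had (congrArg Subtype.val e), nad⟩
    have rDB : ((G.induce s)ᶜ).Reachable D B :=
      SimpleGraph.Adj.reachable ⟨fun e => hbd (congrArg Subtype.val e).symm, fun e => nbd e.symm⟩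
    have rCD := rCA.trans rAD
    have rCB := rCD.trans rDB
    have rAB := rAD.trans rDB
    rcases hmem u with rfl | rfl | rfl | rfl <;> rcases hmem v with rfl | rfl | rfl | rfl <;>
      first
        | exact SimpleGraph.Reachable.refl _
        | exact rCA | exact rCA.symm | exact rAD | exact rAD.symm
        | exact rDB | exact rDB.symm | exact rCD | exact rCD.symm
        | exact rCB | exact rCB.symm | exact rAB | exact rAB.symm
end

section
/- Let G = (X, E) be a connected graph (of any cardinality) with no induced path on four vertices, and let x ∈ X. Then every connected component of the subgraph of G induced on inc(x) is a module of G. -/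
theorem component_of_incSet_isModule
    {X : Type*} (G : SimpleGraph X) (hconn : G.Connected) (hP4 : P4Free G) (x : X) :
    ∀ c : (G.induce (incSet G x)).ConnectedComponent,
      IsModule G (Subtype.val '' c.supp) := by
  intro c v hv
  by_cases hvx : v = x
  · right
    rintro _ ⟨⟨a, ha⟩, _, rfl⟩ hadj
    subst hvx
    exact ha.2 hadj
  by_cases hadjx : G.Adj x v
  · -- v is a neighbour of x
    have key : ∀ (a b : incSet G x) (w : (G.induce (incSet G x)).Walk a b),
        G.Adj v a → G.Adj v b := by
      intro a b w
      induction w with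
      | nil => exact id
      | @cons a u b h w ih =>
        intro hva
        apply ih
        by_contra hnv
        have hadj' : G.Adj (a : X) (u : X) := h
        exact hP4 x v a u ⟨hadjx.ne, fun e => a.2.1 e.symm, fun e => u.2.1 e.symm,
          hva.ne, fun e => u.2.2 (e ▸ hadjx), hadj'.ne,
          hadjx, hva, hadj', fun h' => a.2.2 h', fun h' => u.2.2 h', hnv⟩
    by_cases hex : ∃ a ∈ Subtype.val '' c.supp, G.Adj v a
    · left
      obtain ⟨_, ⟨a, ha, rfl⟩, hva⟩ := hex
      rintro _ ⟨b, hb, rfl⟩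
      have hreach : (G.induce (incSet G x)).Reachable a b := by
        rw [SimpleGraph.ConnectedComponent.mem_supp_iff] at ha hb
        exact SimpleGraph.ConnectedComponent.exact (ha.trans hb.symm)
      exact key a b hreach.some hva
    · right
      push_neg at hex
      exact hex
  · -- v ∈ incSet G x but not in c
    right
    rintro _ ⟨⟨b, hb⟩, hmem, rfl⟩ hvb
    have hv' : v ∈ incSet G x := ⟨hvx, hadjx⟩
    have hadj' : (G.induce (incSet G x)).Adj ⟨v, hv'⟩ ⟨b, hb⟩ := hvb
    apply hv
    refine ⟨⟨v, hv'⟩, ?_, rfl⟩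
    rw [SimpleGraph.ConnectedComponent.mem_supp_iff] at hmem ⊢
    rw [← hmem]
    exact SimpleGraph.ConnectedComponent.sound hadj'.reachable
end

section
/- Let G = (X, E) be a connected graph (of any cardinality) with no induced path on four vertices, and let x ∈ X. For every connected component C of the subgraph of G induced on inc(x), the set N(x) is partitioned into the set N_1 of vertices of N(x) adjacent to every element of C and the set N_2 of vertices of N(x) adjacent to no element of C, and every element of N_1 is adjacent to every element of N_2. -/
theorem component_partitions_neighborhood
    {X : Type*} (G : SimpleGraph X) (hconn : G.Connected) (hP4 : P4Free G) (x : X) :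
    ∀ c : (G.induce (incSet G x)).ConnectedComponent,
      (({y | G.Adj x y ∧ ∀ z ∈ Subtype.val '' c.supp, G.Adj y z} ∪
        {y | G.Adj x y ∧ ∀ z ∈ Subtype.val '' c.supp, ¬ G.Adj y z}) = G.neighborSet x) ∧
      Disjoint {y | G.Adj x y ∧ ∀ z ∈ Subtype.val '' c.supp, G.Adj y z}
        {y | G.Adj x y ∧ ∀ z ∈ Subtype.val '' c.supp, ¬ G.Adj y z} ∧
      (∀ y₁ ∈ {y | G.Adj x y ∧ ∀ z ∈ Subtype.val '' c.supp, G.Adj y z},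
        ∀ y₂ ∈ {y | G.Adj x y ∧ ∀ z ∈ Subtype.val '' c.supp, ¬ G.Adj y z},
          G.Adj y₁ y₂) := by
  intro c
  -- key lemma: if y ~ x and y is adjacent to z1 ∈ inc(x), then y is adjacent to
  -- everything reachable from z1 inside inc(x).
  have key : ∀ (y : X), G.Adj x y → ∀ (z1 z2 : incSet G x),
      (G.induce (incSet G x)).Reachable z1 z2 → G.Adj y ↑z1 → G.Adj y ↑z2 := by
    intro y hxy z1 z2 hr
    obtain ⟨w⟩ := hr
    induction w with
    | nil => exact id
    | @cons a u b h p ih =>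
      intro hadj
      apply ih
      by_contra hnu
      exact hP4 x y ↑a ↑u ⟨hxy.ne, Ne.symm a.2.1, Ne.symm u.2.1, hadj.ne,
        (fun he => u.2.2 (he ▸ hxy)), (fun he => h.ne (Subtype.ext he)),
        hxy, hadj, h, a.2.2, u.2.2, hnu⟩
  have hreach : ∀ z1 z2 : incSet G x, z1 ∈ c.supp → z2 ∈ c.supp →
      (G.induce (incSet G x)).Reachable z1 z2 := by
    intro z1 z2 h1 h2
    exact SimpleGraph.ConnectedComponent.exact (h1.trans h2.symm)
  obtain ⟨z0, hz0⟩ := c.exists_rep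
  have hz0supp : z0 ∈ c.supp := hz0
  refine ⟨?_, ?_, ?_⟩
  · ext y
    simp only [Set.mem_union, Set.mem_setOf_eq, SimpleGraph.mem_neighborSet]
    constructor
    · rintro (⟨h, _⟩ | ⟨h, _⟩) <;> exact h
    · intro hxy
      by_cases hadj : ∃ z ∈ Subtype.val '' c.supp, G.Adj y z
      · left
        refine ⟨hxy, ?_⟩
        obtain ⟨z, ⟨zz, hzz, rfl⟩, hyz⟩ := hadj
        rintro w ⟨ww, hww, rfl⟩
        exact key y hxy zz ww (hreach zz ww hzz hww) hyz
      · right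
        push_neg at hadj
        exact ⟨hxy, hadj⟩
  · rw [Set.disjoint_left]
    rintro y ⟨hxy, hall⟩ ⟨_, hnone⟩
    exact hnone ↑z0 ⟨z0, hz0supp, rfl⟩ (hall ↑z0 ⟨z0, hz0supp, rfl⟩)
  · rintro y₁ ⟨hxy₁, hall⟩ y₂ ⟨hxy₂, hnone⟩
    by_contra h12
    have hy₁z : G.Adj y₁ ↑z0 := hall ↑z0 ⟨z0, hz0supp, rfl⟩
    have hy₂z : ¬ G.Adj y₂ ↑z0 := hnone ↑z0 ⟨z0, hz0supp, rfl⟩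
    exact hP4 (↑z0) y₁ x y₂ ⟨hy₁z.symm.ne, z0.2.1,
      (fun he => z0.2.2 (he ▸ hxy₂)), hxy₁.symm.ne,
      (fun he => hy₂z (he ▸ hy₁z)), hxy₂.ne,
      hy₁z.symm, hxy₁.symm, hxy₂,
      (fun hc => z0.2.2 hc.symm), (fun hc => hy₂z hc.symm), h12⟩
end

section
/- Let G = (X, E) be a connected graph (of any cardinality) with no induced path on four vertices, and let x ∈ X be such that N_x is nonempty. Then every vertex of N_x is adjacent to every vertex of X \ N_x. -/
theorem NSet_adj_compl
    {X : Type*} (G : SimpleGraph X) (hconn : G.Connected) (hP4 : P4Free G)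
    (x : X) (hne : (NSet G x).Nonempty) :
    ∀ y ∈ NSet G x, ∀ z ∉ NSet G x, G.Adj y z := by
  intro y hy z hz
  obtain ⟨hxy, hyinc⟩ := hy
  by_cases hzx : z = x
  · subst hzx; exact hxy.symm
  by_cases hadj : G.Adj x z
  · -- z is a neighbour of x not in NSet, so some w ∈ inc(x) with ¬ z~w
    simp only [NSet, Set.mem_setOf_eq, not_and, not_forall] at hz
    obtain ⟨w, hw, hzw⟩ := hz hadj
    by_contra hyz
    exact hP4 z x y w ⟨G.ne_of_adj hadj.symm, fun h => hzw (h ▸ hyinc w hw),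
      fun h => (h ▸ hw.2) hadj, (G.ne_of_adj hxy), hw.1.symm, G.ne_of_adj (hyinc w hw),
      hadj.symm, hxy, hyinc w hw, fun h => hyz h.symm, hzw, hw.2⟩
  · exact hyinc z ⟨hzx, hadj⟩
end

section
/- A graph G (of any cardinality) has no induced path on four vertices if and only if there exists an N-free partial order on the vertex set of G whose comparability graph is G. -/
/-- `u` and `v` are incomparable with respect to the relation `le`. -/
def IncompRelLE {X : Type*} (le : X → X → Prop) (u v : X) : Prop :=
  ¬ le u v ∧ ¬ le v u

/-- The order with `≤` relation `le` is `N`-free: there are no four distinct elements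
`a, b, c, d` with `a < b`, `c < b`, `c < d` and no other comparabilities among them. -/
def NFreeRel {X : Type*} (le : X → X → Prop) : Prop :=
  ∀ a b c d : X, ¬ (a ≠ b ∧ a ≠ c ∧ a ≠ d ∧ b ≠ c ∧ b ≠ d ∧ c ≠ d ∧
    le a b ∧ le c b ∧ le c d ∧ IncompRelLE le a c ∧ IncompRelLE le a d ∧ IncompRelLE le b d)

/-- The comparability graph of a partial order. -/
def compGraphOfLE {X : Type*} (po : PartialOrder X) : SimpleGraph X where
  Adj u v := u ≠ v ∧ (po.le u v ∨ po.le v u)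
  symm := by constructor; intro u v h; exact ⟨h.1.symm, h.2.symm⟩
  loopless := by constructor; intro u h; exact h.1 rfl


open Relation

section Helpers

variable {X : Type*}

/-- One step in the complement graph restricted to neighbours of `v`. -/
def Kstep (G : SimpleGraph X) (v a b : X) : Prop :=
  G.Adj v a ∧ G.Adj v b ∧ ¬ G.Adj a b

/-- The complement-component of `u` among the neighbours of `v`. -/
def Kset (G : SimpleGraph X) (u v : X) : Set X :=
  {x | ReflTransGen (Kstep G v) u x}

variable {G : SimpleGraph X}

lemma kstep_symm {v : X} : Symmetric (Kstep G v) :=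
  fun _ _ h => ⟨h.2.1, h.1, fun h' => h.2.2 h'.symm⟩

lemma mem_Kset_self (u v : X) : u ∈ Kset G u v := ReflTransGen.refl

lemma Kset_nonempty (u v : X) : (Kset G u v).Nonempty := ⟨u, mem_Kset_self u v⟩

lemma Kset_comm {u v x : X} (h : x ∈ Kset G u v) : u ∈ Kset G x v :=
  (@ReflTransGen.symmetric _ _ ⟨fun _ _ h' => kstep_symm h'⟩).symm _ _ h

lemma Kset_eq_of_mem {u v x : X} (h : x ∈ Kset G u v) : Kset G u v = Kset G x v := by
  ext y
  exact ⟨fun hy => (Kset_comm h).trans hy, fun hy => h.trans hy⟩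

lemma adj_of_mem_Kset {u v x : X} (huv : G.Adj v u) (hx : x ∈ Kset G u v) : G.Adj v x := by
  induction hx with
  | refl => exact huv
  | tail _ hstep _ => exact hstep.2.1

/-- The key cross adjacency lemma: if `G` is `P4`-free and `u ~ v`, then every element of
`Kset G u v` is adjacent to every element of `Kset G v u`. -/
lemma cross_adj (hP : P4Free G) {u v x : X} (huv : G.Adj u v) (hx : x ∈ Kset G u v) :
    ∀ y ∈ Kset G v u, G.Adj x y := by
  induction hx with
  | refl =>
    intro y hy
    exact adj_of_mem_Kset huv hy
  | @tail b x hub hbx ih =>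
    intro y hy
    induction hy with
    | refl => exact hbx.2.1.symm
    | @tail c y hvc hcy ih2 =>
      by_contra hxy
      have hbc : G.Adj b c := ih c hvc
      have hby : G.Adj b y := ih y (hvc.tail hcy)
      have hxc : G.Adj x c := ih2
      have hxb : ¬ G.Adj x b := fun h => hbx.2.2 h.symm
      have hcy' : ¬ G.Adj c y := hcy.2.2
      refine hP x c b y ⟨hxc.ne, ?_, ?_, hbc.ne.symm, ?_, hby.ne, hxc, hbc.symm, hby, hxb, hxy, hcy'⟩
      · rintro rfl; exact hxy hby
      · rintro rfl; exact hcy' hxc.symm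
      · rintro rfl; exact hxy hxc

lemma Kset_subset_of_adj {w u v : X} (h : ∀ y ∈ Kset G w u, G.Adj v y) :
    Kset G w u ⊆ Kset G w v := by
  intro x hx
  induction hx with
  | refl => exact mem_Kset_self w v
  | @tail b x hwb hbx ih =>
    exact ih.tail ⟨h b hwb, h x (hwb.tail hbx), hbx.2.2⟩

/-- Lemma E: if `u ~ w`, `w ~ v` and `v` lies in the complement-component of `u` among
the neighbours of `w`, then the components of `w` among the neighbours of `u` and of `v`
coincide. -/
lemma Kset_eq_E (hP : P4Free G) {u v w : X} (huw : G.Adj u w) (hwv : G.Adj w v)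
    (hm : v ∈ Kset G u w) : Kset G w u = Kset G w v := by
  have h1 : ∀ y ∈ Kset G w u, G.Adj v y := fun y hy => cross_adj hP huw hm y hy
  have h2 : ∀ y ∈ Kset G w v, G.Adj u y := fun y hy =>
    cross_adj hP hwv.symm (Kset_comm hm) y hy
  exact le_antisymm (Kset_subset_of_adj h1) (Kset_subset_of_adj h2)

/-- Lemma D': if `u,v,w` are mutually adjacent and neither `v ∈ Kset u w` nor
`w ∈ Kset u v`, then `Kset u v = Kset u w`. -/
lemma Kset_eq_D {u v w : X} (huv : G.Adj u v) (huw : G.Adj u w) (hvw : G.Adj v w)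
    (h1 : v ∉ Kset G u w) (h2 : w ∉ Kset G u v) : Kset G u v = Kset G u w := by
  have hA : ∀ y ∈ Kset G u w, G.Adj v y := by
    intro y hy
    by_contra hvy
    have hwy : G.Adj w y := adj_of_mem_Kset huw.symm hy
    have : y ∈ Kset G v w := ReflTransGen.single ⟨hvw.symm, hwy, hvy⟩
    exact h1 (hy.trans (Kset_comm this))
  have hB : ∀ y ∈ Kset G u v, G.Adj w y := by
    intro y hy
    by_contra hwy
    have hvy : G.Adj v y := adj_of_mem_Kset huv.symm hy
    have : y ∈ Kset G w v := ReflTransGen.single ⟨hvw, hvy, hwy⟩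
    exact h2 (hy.trans (Kset_comm this))
  exact le_antisymm (Kset_subset_of_adj hB) (Kset_subset_of_adj hA)

end Helpers
section Main

variable {X : Type*} {G : SimpleGraph X}

/-- The minimum (w.r.t. a fixed well-ordering) of `Kset G u v`. -/
noncomputable def Kmin (G : SimpleGraph X) (u v : X) : X :=
  WellFounded.min (IsWellFounded.wf (r := WellOrderingRel)) (Kset G u v) (Kset_nonempty u v)

lemma Kmin_mem (u v : X) : Kmin G u v ∈ Kset G u v :=
  WellFounded.min_mem _ _ _

lemma Kmin_congr {u v u' v' : X} (h : Kset G u v = Kset G u' v') :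
    Kmin G u v = Kmin G u' v' := by
  unfold Kmin
  congr 1

lemma Kmin_ne (hP : P4Free G) {u v : X} (huv : G.Adj u v) : Kmin G u v ≠ Kmin G v u := by
  intro h
  have := cross_adj hP huv (Kmin_mem u v) (Kmin G u v) (h ▸ Kmin_mem v u)
  exact G.loopless.irrefl _ this

theorem forward_dir (hP : P4Free G) :
    ∃ po : PartialOrder X, NFreeRel po.le ∧ compGraphOfLE po = G := by
  classical
  set r : X → X → Prop := WellOrderingRel with hr
  let le : X → X → Prop := fun u v => u = v ∨ (G.Adj u v ∧ r (Kmin G u v) (Kmin G v u))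
  have hasymm : ∀ a b : X, r a b → r b a → False := fun a b h1 h2 => asymm h1 h2
  have hcomp : ∀ a b : X, G.Adj a b → le a b ∨ le b a := by
    intro a b h
    rcases trichotomous_of r (Kmin G a b) (Kmin G b a) with h1 | h1 | h1
    · exact Or.inl (Or.inr ⟨h, h1⟩)
    · exact absurd h1 (Kmin_ne hP h)
    · exact Or.inr (Or.inr ⟨h.symm, h1⟩)
  have htrans : ∀ u v w : X, le u v → le v w → le u w := by
    intro u v w huv hvw
    rcases huv with rfl | ⟨hadj1, h1⟩
    · exact hvw
    rcases hvw with rfl | ⟨hadj2, h2⟩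
    · exact Or.inr ⟨hadj1, h1⟩
    by_cases huw0 : u = w
    · exact Or.inl huw0
    have hKuv : w ∉ Kset G u v := by
      intro hw
      have m1 : Kmin G u v = Kmin G w v := Kmin_congr (Kset_eq_of_mem hw)
      have m2 : Kmin G v u = Kmin G v w := Kmin_congr (Kset_eq_E hP hadj1 hadj2 hw)
      rw [← m1, ← m2] at h2
      exact hasymm _ _ h1 h2
    have hadj3 : G.Adj u w := by
      by_contra hnadj
      exact hKuv (Relation.ReflTransGen.single ⟨hadj1.symm, hadj2, hnadj⟩)
    refine Or.inr ⟨hadj3, ?_⟩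
    by_cases hPuv : v ∈ Kset G u w
    · have m1 : Kmin G u w = Kmin G v w := Kmin_congr (Kset_eq_of_mem hPuv)
      have m2 : Kmin G w u = Kmin G w v := Kmin_congr (Kset_eq_E hP hadj3 hadj2.symm hPuv)
      rw [m1, m2]
      exact h2
    by_cases hPvw : w ∈ Kset G v u
    · have m2 : Kmin G v u = Kmin G w u := Kmin_congr (Kset_eq_of_mem hPvw)
      have m1 : Kmin G u w = Kmin G u v :=
        Kmin_congr (Kset_eq_E hP hadj3.symm hadj1 (Kset_comm hPvw))
      rw [m1, ← m2]
      exact h1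
    have e1 : Kset G u v = Kset G u w := Kset_eq_D hadj1 hadj3 hadj2 hPuv hKuv
    have e2 : Kset G v u = Kset G v w :=
      Kset_eq_D hadj1.symm hadj2 hadj3 (fun h => hPuv (Kset_comm h)) hPvw
    have e3 : Kset G w u = Kset G w v :=
      Kset_eq_D hadj3.symm hadj2.symm hadj1 (fun h => hKuv (Kset_comm h))
        (fun h => hPvw (Kset_comm h))
    rw [← Kmin_congr e1, Kmin_congr e3]
    rw [Kmin_congr e2] at h1
    rw [← Kmin_congr e3] at h2
    rw [← Kmin_congr e2] at h1
    have h2' : r (Kmin G v u) (Kmin G w v) := by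
      rw [Kmin_congr e2]
      rw [Kmin_congr e3] at h2
      exact h2
    exact _root_.trans h1 h2'
  have hantisymm : ∀ a b : X, le a b → le b a → a = b := by
    intro a b hab hba
    rcases hab with rfl | ⟨hadj, h1⟩
    · rfl
    rcases hba with rfl | ⟨hadj2, h2⟩
    · rfl
    exact absurd h2 (fun h => hasymm _ _ h1 h)
  refine ⟨{ le := le, le_refl := fun a => Or.inl rfl, le_trans := htrans,
            le_antisymm := hantisymm }, ?_, ?_⟩
  · -- N-freeness
    rintro a b c d ⟨hab, hac, had, hbc, hbd, hcd, lab, lcb, lcd, iac, iad, ibd⟩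
    have adj_of_le : ∀ x y : X, x ≠ y → le x y → G.Adj x y := by
      intro x y hne h
      rcases h with rfl | ⟨h, _⟩
      · exact absurd rfl hne
      · exact h
    have nadj : ∀ x y : X, x ≠ y → IncompRelLE le x y → ¬ G.Adj x y := by
      intro x y _ hinc h
      rcases hcomp x y h with h' | h'
      · exact hinc.1 h'
      · exact hinc.2 h'
    exact hP a b c d ⟨hab, hac, had, hbc, hbd, hcd, adj_of_le a b hab lab,
      (adj_of_le c b hbc.symm lcb).symm, adj_of_le c d hcd lcd,
      nadj a c hac iac, nadj a d had iad, nadj b d hbd ibd⟩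
  · -- comparability graph equals G
    ext u v
    show (u ≠ v ∧ (le u v ∨ le v u)) ↔ G.Adj u v
    constructor
    · rintro ⟨hne, h | h⟩
      · rcases h with rfl | ⟨h, _⟩
        · exact absurd rfl hne
        · exact h
      · rcases h with rfl | ⟨h, _⟩
        · exact absurd rfl hne
        · exact h.symm
    · intro h
      exact ⟨h.ne, hcomp u v h⟩

end Main

theorem p4Free_iff_comparability_of_nfree_order
    {X : Type*} (G : SimpleGraph X) :
    P4Free G ↔ ∃ po : PartialOrder X, NFreeRel po.le ∧ compGraphOfLE po = G := by
  constructor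
  · exact forward_dir
  · rintro ⟨po, hN, rfl⟩
    rintro a b c d ⟨hab, hac, had, hbc, hbd, hcd, eab, ebc, ecd, nac, nad, nbd⟩
    have pab : po.le a b ∨ po.le b a := eab.2
    have pbc : po.le b c ∨ po.le c b := ebc.2
    have pcd : po.le c d ∨ po.le d c := ecd.2
    have iac : IncompRelLE po.le a c :=
      ⟨fun h => nac ⟨hac, Or.inl h⟩, fun h => nac ⟨hac, Or.inr h⟩⟩
    have iad : IncompRelLE po.le a d :=
      ⟨fun h => nad ⟨had, Or.inl h⟩, fun h => nad ⟨had, Or.inr h⟩⟩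
    have ibd : IncompRelLE po.le b d :=
      ⟨fun h => nbd ⟨hbd, Or.inl h⟩, fun h => nbd ⟨hbd, Or.inr h⟩⟩
    rcases pab with h1 | h1
    · have h2 : po.le c b := by
        rcases pbc with h2 | h2
        · exact absurd (po.le_trans _ _ _ h1 h2) iac.1
        · exact h2
      have h3 : po.le c d := by
        rcases pcd with h3 | h3
        · exact h3
        · exact absurd (po.le_trans _ _ _ h3 h2) ibd.2
      exact hN a b c d ⟨hab, hac, had, hbc, hbd, hcd, h1, h2, h3, iac, iad, ibd⟩
    · have h2 : po.le b c := by
        rcases pbc with h2 | h2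
        · exact h2
        · exact absurd (po.le_trans _ _ _ h2 h1) iac.2
      have h3 : po.le d c := by
        rcases pcd with h3 | h3
        · exact absurd (po.le_trans _ _ _ h2 h3) ibd.1
        · exact h3
      exact hN d c b a ⟨hcd.symm, hbd.symm, had.symm, hbc.symm, hac.symm, hab.symm, h3, h2, h1,
        ⟨ibd.2, ibd.1⟩, ⟨iad.2, iad.1⟩, ⟨iac.2, iac.1⟩⟩
end

section
/- Let P = (X, ≤) be a poset. Then P is N-free if and only if for every x ∈ X, every connected component of the comparability graph of P restricted to inc(x) is a module of P. -/
/-- `(a,b,c,d)` is an `N` in the poset: the four elements are distinct, `a < b`, `c < b`,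
`c < d`, and these are the only comparabilities among them. -/
def IsN {X : Type*} [PartialOrder X] (a b c d : X) : Prop :=
  a ≠ b ∧ a ≠ c ∧ a ≠ d ∧ b ≠ c ∧ b ≠ d ∧ c ≠ d ∧
  a < b ∧ c < b ∧ c < d ∧
  (¬ a ≤ c ∧ ¬ c ≤ a) ∧ (¬ a ≤ d ∧ ¬ d ≤ a) ∧ (¬ b ≤ d ∧ ¬ d ≤ b)

/-- A poset is `N`-free if it contains no `N`. -/
def NFree (X : Type*) [PartialOrder X] : Prop :=
  ∀ a b c d : X, ¬ IsN a b c d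

/-- `inc(x)`: the set of elements incomparable to `x`. -/
def incP {X : Type*} [PartialOrder X] (x : X) : Set X :=
  {y | ¬ x ≤ y ∧ ¬ y ≤ x}

/-- The comparability graph of a poset. -/
def compGraph (X : Type*) [PartialOrder X] : SimpleGraph X where
  Adj u v := u < v ∨ v < u
  symm := by refine ⟨?_⟩; intro u v h; exact h.symm
  loopless := by refine ⟨?_⟩; intro u h; rcases h with h | h <;> exact lt_irrefl u h

/-- `A` is a module of the poset: every element outside `A` relates in the same way
to all elements of `A`. -/
def PModule {X : Type*} [PartialOrder X] (A : Set X) : Prop :=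
  ∀ v ∉ A, ∀ a ∈ A, ∀ a' ∈ A, (v < a → v < a') ∧ (a < v → a' < v)

/-- `C⁺_x`: elements above `x` comparable to all elements of `inc(x)`. -/
def Cplus {X : Type*} [PartialOrder X] (x : X) : Set X :=
  {y | x < y ∧ ∀ z ∈ incP x, (y ≤ z ∨ z ≤ y)}

/-- `C⁻_x`: elements below `x` comparable to all elements of `inc(x)`. -/
def Cminus {X : Type*} [PartialOrder X] (x : X) : Set X :=
  {y | y < x ∧ ∀ z ∈ incP x, (y ≤ z ∨ z ≤ y)}

/-- A poset is chain complete if every nonempty chain has a supremum and an infimum. -/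
def ChainComplete (X : Type*) [PartialOrder X] : Prop :=
  ∀ C : Set X, C.Nonempty → IsChain (· ≤ ·) C → (∃ s, IsLUB C s) ∧ (∃ i, IsGLB C i)

lemma adj_induce {X : Type*} [PartialOrder X] {x : X} {u w : incP x}
    (h : ((compGraph X).induce (incP x)).Adj u w) : u.val < w.val ∨ w.val < u.val := h

lemma reach_above {X : Type*} [PartialOrder X] (hN : NFree X) {x v : X} (hxv : x < v)
    {u w : incP x} (hr : ((compGraph X).induce (incP x)).Reachable u w)
    (h : u.val < v) : w.val < v := by
  obtain ⟨p⟩ := hr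
  induction p with
  | nil => exact h
  | @cons u m w hadj p ih =>
    apply ih
    rcases adj_induce hadj with hum | hmu
    · obtain ⟨hu1, hu2⟩ := u.2
      obtain ⟨hm1, hm2⟩ := m.2
      by_contra hnot
      exact hN x v u.val m.val ⟨hxv.ne, fun e => hu1 e.le, fun e => hm1 e.le,
        fun e => (lt_irrefl v (e ▸ h)).elim, fun e => hm1 (e ▸ hxv).le,
        hum.ne, hxv, h, hum,
        ⟨hu1, hu2⟩, ⟨hm1, hm2⟩,
        ⟨fun hvm => hm1 (hxv.le.trans hvm),
         fun hmv => hnot (lt_of_le_of_ne hmv (fun e => hm1 (e ▸ hxv).le))⟩⟩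
    · exact hmu.trans h

lemma reach_below {X : Type*} [PartialOrder X] (hN : NFree X) {x v : X} (hvx : v < x)
    {u w : incP x} (hr : ((compGraph X).induce (incP x)).Reachable u w)
    (h : v < u.val) : v < w.val := by
  obtain ⟨p⟩ := hr
  induction p with
  | nil => exact h
  | @cons u m w hadj p ih =>
    apply ih
    rcases adj_induce hadj with hum | hmu
    · exact h.trans hum
    · obtain ⟨hu1, hu2⟩ := u.2
      obtain ⟨hm1, hm2⟩ := m.2
      by_contra hnot
      exact hN m.val u.val v x ⟨hmu.ne, fun e => hm2 (e ▸ hvx).le, fun e => hm2 e.le,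
        h.ne', fun e => hu2 e.le, hvx.ne,
        hmu, h, hvx,
        ⟨fun hmv => hm2 (hmv.trans hvx.le),
         fun hvm => hnot (lt_of_le_of_ne hvm (fun e => hm2 (e ▸ hvx).le))⟩,
        ⟨hm2, hm1⟩, ⟨hu2, hu1⟩⟩

theorem nfree_iff_components_of_incP_are_modules
    {X : Type*} [PartialOrder X] :
    NFree X ↔ ∀ x : X, ∀ c : ((compGraph X).induce (incP x)).ConnectedComponent,
      PModule (Subtype.val '' c.supp) := by
  constructor
  · intro hN x c v hv a ha a' ha'
    obtain ⟨⟨a, hainc⟩, hac, rfl⟩ := ha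
    obtain ⟨⟨a', hainc'⟩, hac', rfl⟩ := ha'
    rw [SimpleGraph.ConnectedComponent.mem_supp_iff] at hac hac'
    have hr : ((compGraph X).induce (incP x)).Reachable ⟨a, hainc⟩ ⟨a', hainc'⟩ :=
      SimpleGraph.ConnectedComponent.exact (hac.trans hac'.symm)
    by_cases hvinc : v ∈ incP x
    · constructor
      · intro hva
        exfalso
        apply hv
        have hadj : ((compGraph X).induce (incP x)).Adj ⟨v, hvinc⟩ ⟨a, hainc⟩ := Or.inl hva
        refine ⟨⟨v, hvinc⟩, ?_, rfl⟩
        rw [SimpleGraph.ConnectedComponent.mem_supp_iff, ← hac]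
        exact SimpleGraph.ConnectedComponent.sound hadj.reachable
      · intro hav
        exfalso
        apply hv
        have hadj : ((compGraph X).induce (incP x)).Adj ⟨v, hvinc⟩ ⟨a, hainc⟩ := Or.inr hav
        refine ⟨⟨v, hvinc⟩, ?_, rfl⟩
        rw [SimpleGraph.ConnectedComponent.mem_supp_iff, ← hac]
        exact SimpleGraph.ConnectedComponent.sound hadj.reachable
    · have hcomp : x ≤ v ∨ v ≤ x := by
        by_contra hc
        push_neg at hc
        exact hvinc ⟨hc.1, hc.2⟩
      rcases hcomp with hxv | hvx
      · constructor
        · intro hva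
          exact absurd (hxv.trans hva.le) hainc.1
        · intro hav
          rcases hxv.lt_or_eq with hxv | rfl
          · exact reach_above hN hxv hr hav
          · exact absurd hav.le hainc.2
      · constructor
        · intro hva
          rcases hvx.lt_or_eq with hvx | rfl
          · exact reach_below hN hvx hr hva
          · exact absurd hva.le hainc.1
        · intro hav
          exact absurd (hav.le.trans hvx) hainc.2
  · intro h a b c d hN
    obtain ⟨hab, hac, had, hbc, hbd, hcd, haltb, hcltb, hcltd, ⟨hac1, hac2⟩,
      ⟨had1, had2⟩, ⟨hbd1, hbd2⟩⟩ := hN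
    have hcinc : c ∈ incP a := ⟨hac1, hac2⟩
    have hdinc : d ∈ incP a := ⟨had1, had2⟩
    have hadj : ((compGraph X).induce (incP a)).Adj ⟨c, hcinc⟩ ⟨d, hdinc⟩ := Or.inl hcltd
    set C := ((compGraph X).induce (incP a)).connectedComponentMk ⟨c, hcinc⟩ with hC
    have hb : b ∉ Subtype.val '' C.supp := by
      rintro ⟨⟨b', hb'⟩, _, rfl⟩
      exact hb'.1 haltb.le
    have hcmem : c ∈ Subtype.val '' C.supp := ⟨⟨c, hcinc⟩, rfl, rfl⟩
    have hdmem : d ∈ Subtype.val '' C.supp := by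
      refine ⟨⟨d, hdinc⟩, ?_, rfl⟩
      rw [SimpleGraph.ConnectedComponent.mem_supp_iff, hC]
      exact (SimpleGraph.ConnectedComponent.sound hadj.reachable).symm
    exact hbd2 ((h a C b hb c hcmem d hdmem).2 hcltb).le
end

section
/- Every prime graph with at least three vertices contains an induced path on four vertices; equivalently, every graph with at least three vertices and no induced path on four vertices has a nontrivial module. -/
/-- A graph is prime if all its modules are trivial. -/
def GraphPrime {X : Type*} (G : SimpleGraph X) : Prop :=
  ∀ A : Set X, IsModule G A → A = ∅ ∨ (∃ a : X, A = {a}) ∨ A = Set.univ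

section Helpers

variable {X : Type*} {G : SimpleGraph X}

private lemma lemA_s16 (h : P4Free G) {x y y' z : X}
    (hxy : G.Adj x y) (hxy' : G.Adj x y') (hxz : ¬ G.Adj x z)
    (hyz : G.Adj y z) (hy'z : ¬ G.Adj y' z) : G.Adj y y' := by
  by_contra hyy'
  refine h y' x y z ⟨hxy'.ne', ?_, ?_, hxy.ne, ?_, hyz.ne, hxy'.symm, hxy, hyz,
    fun e => hyy' e.symm, hy'z, hxz⟩
  · rintro rfl; exact hy'z hyz
  · rintro rfl; exact hxz hxy'
  · rintro rfl; exact hy'z hxy'.symm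

private lemma lemDualA (h : P4Free G) {x y z z' : X}
    (hxy : G.Adj x y) (hxz : ¬ G.Adj x z) (hxz' : ¬ G.Adj x z')
    (hyz' : G.Adj y z') (hyz : ¬ G.Adj y z) : ¬ G.Adj z z' := by
  intro hzz'
  refine h x y z' z ⟨hxy.ne, ?_, ?_, hyz'.ne, ?_, hzz'.ne', hxy, hyz', hzz'.symm,
    hxz', hxz, hyz⟩
  · rintro rfl; exact hxz hzz'.symm
  · rintro rfl; exact hyz hxy.symm
  · rintro rfl; exact hxz hxy

private lemma lemStar (h : P4Free G) {x y y' z z' : X}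
    (hxy : G.Adj x y) (hxy' : G.Adj x y') (hxz : ¬ G.Adj x z) (hxz' : ¬ G.Adj x z')
    (hyz : G.Adj y z) (hy'z : ¬ G.Adj y' z) (hy'z' : G.Adj y' z') : G.Adj y z' := by
  have hyy' : G.Adj y y' := lemA_s16 h hxy hxy' hxz hyz hy'z
  by_contra hyz'
  by_cases hzz' : G.Adj z z'
  · refine h x y z z' ⟨hxy.ne, ?_, ?_, hyz.ne, ?_, hzz'.ne, hxy, hyz, hzz', hxz, hxz', hyz'⟩
    · rintro rfl; exact hxz' hzz'
    · rintro rfl; exact hxz hzz'.symm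
    · rintro rfl; exact hxz' hxy
  · refine h z y y' z' ⟨hyz.ne', ?_, ?_, hyy'.ne, ?_, hy'z'.ne, hyz.symm, hyy', hy'z',
      fun e => hy'z e.symm, hzz', hyz'⟩
    · rintro rfl; exact hxz hxy'
    · rintro rfl; exact hy'z hy'z'
    · rintro rfl; exact hxz' hxy

private lemma nontriv_of {A : Set X} {u w t : X} (hu : u ∈ A) (hw : w ∈ A)
    (huw : u ≠ w) (ht : t ∉ A) :
    ¬ (A = ∅ ∨ (∃ a : X, A = {a}) ∨ A = Set.univ) := by
  rintro (rfl | ⟨a, rfl⟩ | rfl)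
  · exact hu
  · exact huw (hu.trans hw.symm)
  · exact ht (Set.mem_univ t)

private lemma keyLemma (G : SimpleGraph X) (h : P4Free G)
    (hcard : ∃ a b c : X, a ≠ b ∧ a ≠ c ∧ b ≠ c) :
    ∃ A : Set X, IsModule G A ∧
      ¬ (A = ∅ ∨ (∃ a : X, A = {a}) ∨ A = Set.univ) := by
  obtain ⟨a, b, c, hab, hac, hbc⟩ := hcard
  by_cases hA : ∃ x y z, G.Adj x y ∧ ¬ G.Adj x z ∧ ¬ G.Adj y z
  · obtain ⟨x, y0, z0, hxy0, hxz0, hy0z0⟩ := hA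
    refine ⟨insert x ({y | G.Adj x y ∧ ¬ G.Adj y z0} ∪
      {z | ¬ G.Adj x z ∧ ∃ y, G.Adj x y ∧ ¬ G.Adj y z0 ∧ G.Adj y z}), ?_, ?_⟩
    · intro v hv
      have hvx : v ≠ x := fun e => hv (by rw [e]; exact Set.mem_insert x _)
      have hvP : ¬ (G.Adj x v ∧ ¬ G.Adj v z0) :=
        fun hm => hv (Set.mem_insert_of_mem _ (Or.inl hm))
      have hvQ : ¬ (¬ G.Adj x v ∧ ∃ y, G.Adj x y ∧ ¬ G.Adj y z0 ∧ G.Adj y v) :=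
        fun hm => hv (Set.mem_insert_of_mem _ (Or.inr hm))
      by_cases hadj : G.Adj x v
      · left
        have hvz0 : G.Adj v z0 := by
          by_contra hn; exact hvP ⟨hadj, hn⟩
        intro w hw
        rcases Set.mem_insert_iff.1 hw with rfl | hw'
        · exact hadj.symm
        rcases hw' with hw'' | hw''
        · exact lemA_s16 h hadj hw''.1 hxz0 hvz0 hw''.2
        · obtain ⟨hxw, y, hxy, hyz0, hyw⟩ := hw''
          by_contra hvw
          exact hyz0 (lemStar h hxy hadj hxw hxz0 hyw hvw hvz0)
      · right
        intro w hw
        rcases Set.mem_insert_iff.1 hw with rfl | hw'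
        · exact fun e => hadj e.symm
        rcases hw' with hw'' | hw''
        · intro hvw
          exact hvQ ⟨hadj, w, hw''.1, hw''.2, hvw.symm⟩
        · obtain ⟨hxw, y, hxy, hyz0, hyw⟩ := hw''
          have hyv : ¬ G.Adj y v := fun e => hvQ ⟨hadj, y, hxy, hyz0, e⟩
          exact lemDualA h hxy hadj hxw hyw hyv
    · have hz0x : z0 ≠ x := by rintro rfl; exact hy0z0 hxy0.symm
      refine nontriv_of (t := z0) (Set.mem_insert x _)
        (Set.mem_insert_of_mem _ (Or.inl ⟨hxy0, hy0z0⟩)) hxy0.ne ?_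
      intro hz0
      rcases Set.mem_insert_iff.1 hz0 with rfl | hz0'
      · exact hz0x rfl
      rcases hz0' with hz0'' | hz0''
      · exact hxz0 hz0''.1
      · obtain ⟨_, y, _, hyz0, hyz0'⟩ := hz0''
        exact hyz0 hyz0'
  · push_neg at hA
    by_cases h1 : ∃ z, z ≠ a ∧ ¬ G.Adj a z
    · obtain ⟨z, hza, haz⟩ := h1
      by_cases h2 : ∃ y, G.Adj a y
      · obtain ⟨y, hay⟩ := h2
        refine ⟨{v | ¬ G.Adj a v}, ?_, ?_⟩
        · intro v hv
          have hav : G.Adj a v := not_not.1 hv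
          left
          intro w hw
          exact hA a v w hav hw
        · refine nontriv_of (u := a) (w := z) (t := y) (G.irrefl) haz hza.symm ?_
          exact fun hy => hy hay
      · push_neg at h2
        refine ⟨{v | v ≠ a}, ?_, ?_⟩
        · intro v hv
          have : v = a := not_not.1 (fun hne => hv hne)
          subst this
          right
          exact fun w _ => h2 w
        · exact nontriv_of (u := b) (w := c) (t := a) hab.symm hac.symm hbc
            (fun hja => hja rfl)
    · push_neg at h1
      refine ⟨{v | v ≠ a}, ?_, ?_⟩
      · intro v hv
        have : v = a := not_not.1 (fun hne => hv hne)
        subst this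
        left
        exact fun w hw => h1 w hw
      · exact nontriv_of (u := b) (w := c) (t := a) hab.symm hac.symm hbc
          (fun hja => hja rfl)

end Helpers


theorem prime_has_P4_and_P4Free_has_nontrivial_module
    {X : Type*} (G : SimpleGraph X)
    (hcard : ∃ a b c : X, a ≠ b ∧ a ≠ c ∧ b ≠ c) :
    (GraphPrime G → ∃ a b c d : X, IsInducedP4 G a b c d) ∧
    (P4Free G → ∃ A : Set X, IsModule G A ∧
      ¬ (A = ∅ ∨ (∃ a : X, A = {a}) ∨ A = Set.univ)) := by
  constructor
  · intro hp
    by_contra hne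
    push_neg at hne
    have hfree : P4Free G := fun a b c d => hne a b c d
    obtain ⟨A, hA, hnt⟩ := keyLemma G hfree hcard
    exact hnt (hp A hA)
  · intro hfree
    exact keyLemma G hfree hcard
end
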